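/- arXiv:1811.05707 — 3 statements merged into one kernel-verified Lean document; each statement's English description precedes it below -/
import Mathlib

section
/- For every integer k ≥ 5, h_{k,k+4} = (32/3)k^4 - (200/3)k^3 + (1403/6)k^2 - (2717/6)k + 384 (equivalently, 6·h_{k,k+4} = 64k^4 - 400k^3 + 1403k^2 - 2717k + 2304). -/
/-- Integer binomial coefficient with the convention
`C(a,b) = a!/(b!(a-b)!)` if `0 ≤ b ≤ a` and `C(a,b) = 0` otherwise. -/
def ichoose (a b : ℤ) : ℤ := if 0 ≤ b ∧ b ≤ a then (a.toNat.choose b.toNat : ℤ) else 0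

/-- The Delannoy numbers `D(n,m) = ∑_{k=0}^m C(m,k) C(n+m-k, m)`. -/
def delannoy (n m : ℕ) : ℕ :=
  ∑ k ∈ Finset.range (m + 1), Nat.choose m k * Nat.choose (n + m - k) m

/-- `h k n = ∑_{i=0}^{k-1} D(k-1-i, i) C(n-i+k-2, 2k-2)` is the number of
column-convex polyominoes with `k` columns and area `n`. -/
def ccPoly (k n : ℕ) : ℤ :=
  ∑ i ∈ Finset.range k,
    (delannoy (k - 1 - i) i : ℤ) * ichoose ((n : ℤ) - i + k - 2) (2 * (k : ℤ) - 2)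

/-- `r k m = ∑_{i=k}^{m-k} h_{k,i} h_{k,m-i}` is the number of plateau polycubes
of width `k` and lateral area `m`. -/
def plateau (k m : ℕ) : ℤ :=
  ∑ i ∈ Finset.Icc k (m - k), ccPoly k i * ccPoly k (m - i)

set_option linter.unusedTactic false

lemma ichoose_coe (x y : ℕ) : ichoose x y = (x.choose y : ℤ) := by
  unfold ichoose
  split_ifs with h
  · simp
  · push_neg at h
    have h2 : (x:ℤ) < y := h (by positivity)
    have : x < y := by exact_mod_cast h2
    rw [Nat.choose_eq_zero_of_lt this]; simp

lemma choose2 (n : ℕ) : 2 * (n+2).choose 2 = (n+2)*(n+1) := by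
  induction n with
  | zero => decide
  | succ m ih =>
    rw [show m+1+2 = m+3 from rfl, Nat.choose_succ_succ (m+2) 1, Nat.choose_one_right]
    ring_nf; ring_nf at ih; omega

lemma choose3 (n : ℕ) : 6 * (n+3).choose 3 = (n+3)*(n+2)*(n+1) := by
  induction n with
  | zero => decide
  | succ m ih =>
    have h2 := choose2 (m+1)
    rw [show m+1+3 = m+4 from rfl, Nat.choose_succ_succ (m+3) 2]
    ring_nf; ring_nf at ih h2; omega

lemma choose4 (n : ℕ) : 24 * (n+4).choose 4 = (n+4)*(n+3)*(n+2)*(n+1) := by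
  induction n with
  | zero => decide
  | succ m ih =>
    have h3 := choose3 (m+1)
    rw [show m+1+4 = m+5 from rfl, Nat.choose_succ_succ (m+4) 3]
    ring_nf; ring_nf at ih h3
    nlinarith [ih, h3]

lemma qc2 (n : ℕ) (h : 2 ≤ n) : ((n.choose 2 : ℕ) : ℚ) = n*(n-1)/2 := by
  obtain ⟨m, rfl⟩ : ∃ m, n = m + 2 := ⟨n - 2, by omega⟩
  have h1 : ((2 * (m+2).choose 2 : ℕ) : ℚ) = (((m+2)*(m+1) : ℕ) : ℚ) := by rw [choose2]
  push_cast at h1 ⊢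
  linarith

lemma qc3 (n : ℕ) (h : 3 ≤ n) : ((n.choose 3 : ℕ) : ℚ) = n*(n-1)*(n-2)/6 := by
  obtain ⟨m, rfl⟩ : ∃ m, n = m + 3 := ⟨n - 3, by omega⟩
  have h1 : ((6 * (m+3).choose 3 : ℕ) : ℚ) = (((m+3)*(m+2)*(m+1) : ℕ) : ℚ) := by rw [choose3]
  push_cast at h1 ⊢
  linarith

lemma qc4 (n : ℕ) (h : 4 ≤ n) : ((n.choose 4 : ℕ) : ℚ) = n*(n-1)*(n-2)*(n-3)/24 := by
  obtain ⟨m, rfl⟩ : ∃ m, n = m + 4 := ⟨n - 4, by omega⟩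
  have h1 : ((24 * (m+4).choose 4 : ℕ) : ℚ) = (((m+4)*(m+3)*(m+2)*(m+1) : ℕ) : ℚ) := by rw [choose4]
  push_cast at h1 ⊢
  linarith

lemma dlq0 (n : ℕ) : delannoy n 0 = 1 := by simp [delannoy]

lemma dlq1 (n : ℕ) : ((delannoy n 1 : ℕ) : ℚ) = 2*n+1 := by
  simp only [delannoy, Finset.sum_range_succ, Finset.sum_range_zero]
  rw [show n+1-0 = n+1 by omega, show n+1-1 = n by omega]
  simp [Nat.choose_one_right]
  push_cast; ring

lemma dlq2 (n : ℕ) (h : 2 ≤ n) : ((delannoy n 2 : ℕ) : ℚ) = 2*n^2+2*n+1 := by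
  simp only [delannoy, Finset.sum_range_succ, Finset.sum_range_zero]
  rw [show n+2-0 = n+2 by omega, show n+2-1 = n+1 by omega, show n+2-2 = n by omega]
  push_cast
  rw [qc2 (n+2) (by omega), qc2 (n+1) (by omega), qc2 n h]
  simp [Nat.choose]
  push_cast; ring

lemma dlq3 (n : ℕ) (h : 3 ≤ n) : ((delannoy n 3 : ℕ) : ℚ) = (4*n^3+6*n^2+8*n+3)/3 := by
  simp only [delannoy, Finset.sum_range_succ, Finset.sum_range_zero]
  rw [show n+3-0 = n+3 by omega, show n+3-1 = n+2 by omega, show n+3-2 = n+1 by omega,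
      show n+3-3 = n by omega]
  push_cast
  rw [qc3 (n+3) (by omega), qc3 (n+2) (by omega), qc3 (n+1) (by omega), qc3 n h]
  simp [Nat.choose]
  push_cast; ring

lemma dlq4 (n : ℕ) (h : 4 ≤ n) : ((delannoy n 4 : ℕ) : ℚ) = (2*n^4+4*n^3+10*n^2+8*n+3)/3 := by
  simp only [delannoy, Finset.sum_range_succ, Finset.sum_range_zero]
  rw [show n+4-0 = n+4 by omega, show n+4-1 = n+3 by omega, show n+4-2 = n+2 by omega,
      show n+4-3 = n+1 by omega, show n+4-4 = n by omega]
  push_cast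
  rw [qc4 (n+4) (by omega), qc4 (n+3) (by omega), qc4 (n+2) (by omega), qc4 (n+1) (by omega),
      qc4 n h]
  simp [Nat.choose]
  push_cast; ring

lemma ich_eval (t i : ℕ) (h : i ≤ 4) :
    ichoose (((t+9+4 : ℕ) : ℤ) - (i : ℕ) + ((t+9 : ℕ) : ℤ) - 2) (2 * ((t+9 : ℕ) : ℤ) - 2)
      = ((2*t+20-i).choose (4-i) : ℤ) := by
  have ha : (((t+9+4 : ℕ) : ℤ) - (i : ℕ) + ((t+9 : ℕ) : ℤ) - 2) = ((2*t+20-i : ℕ) : ℤ) := by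
    have : (i : ℤ) ≤ 4 := by exact_mod_cast h
    push_cast [show i ≤ 2*t+20 by omega]
    ring
  have hb : (2 * ((t+9 : ℕ) : ℤ) - 2) = ((2*t+16 : ℕ) : ℤ) := by push_cast; ring
  rw [ha, hb, ichoose_coe]
  congr 1
  rw [show 2*t+16 = (2*t+20-i) - (4-i) by omega, Nat.choose_symm (by omega)]

theorem ccPoly_area_width_add_four (k : ℕ) (hk : 5 ≤ k) :
    (ccPoly k (k + 4) : ℚ)
      = 32 / 3 * (k : ℚ) ^ 4 - 200 / 3 * (k : ℚ) ^ 3 + 1403 / 6 * (k : ℚ) ^ 2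
          - 2717 / 6 * (k : ℚ) + 384 := by
  by_cases h8 : k ≤ 8
  case pos =>
    interval_cases k
    · rw [show ccPoly 5 9 = 2299 by decide]; norm_num
    · rw [show ccPoly 6 10 = 5509 by decide]; norm_num
    · rw [show ccPoly 7 11 = 11416 by decide]; norm_num
    · rw [show ccPoly 8 12 = 21284 by decide]; norm_num
  case neg =>
    obtain ⟨t, rfl⟩ : ∃ t, k = t + 9 := ⟨k - 9, by omega⟩
    rw [ccPoly]
    rw [show (∑ i ∈ Finset.range (t+9),
        (delannoy (t+9 - 1 - i) i : ℤ) * ichoose (((t+9+4 : ℕ) : ℤ) - i + (t+9 : ℕ) - 2) (2 * ((t+9 : ℕ) : ℤ) - 2))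
      = ∑ i ∈ Finset.range 5,
        (delannoy (t+9 - 1 - i) i : ℤ) * ichoose (((t+9+4 : ℕ) : ℤ) - i + (t+9 : ℕ) - 2) (2 * ((t+9 : ℕ) : ℤ) - 2) from ?_]
    · simp only [Finset.sum_range_succ, Finset.sum_range_zero]
      rw [ich_eval t 0 (by omega), ich_eval t 1 (by omega), ich_eval t 2 (by omega),
          ich_eval t 3 (by omega), ich_eval t 4 (by omega)]
      rw [show t+9-1-0 = t+8 by omega, show t+9-1-1 = t+7 by omega,
          show t+9-1-2 = t+6 by omega, show t+9-1-3 = t+5 by omega,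
          show t+9-1-4 = t+4 by omega]
      rw [show 2*t+20-0 = 2*t+20 by omega, show 2*t+20-1 = 2*t+19 by omega,
          show 2*t+20-2 = 2*t+18 by omega, show 2*t+20-3 = 2*t+17 by omega,
          show 2*t+20-4 = 2*t+16 by omega]
      simp only [Nat.sub_self, Nat.sub_zero, Nat.reduceSub, Nat.choose_one_right, Nat.choose_zero_right]
      push_cast
      rw [dlq0, dlq1, dlq2 (t+6) (by omega), dlq3 (t+5) (by omega), dlq4 (t+4) (by omega)]
      rw [qc4 (2*t+20) (by omega), qc3 (2*t+19) (by omega), qc2 (2*t+18) (by omega)]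
      push_cast
      ring
    · symm
      apply Finset.sum_subset (Finset.range_subset_range.2 (by omega))
      intro i hi hni
      simp only [Finset.mem_range, not_lt] at hi hni
      have : ichoose (((t+9+4 : ℕ) : ℤ) - i + (t+9 : ℕ) - 2) (2 * ((t+9 : ℕ) : ℤ) - 2) = 0 := by
        rw [ichoose, if_neg]
        push_cast
        intro ⟨_, h2⟩
        have : (5:ℤ) ≤ i := by exact_mod_cast hni
        omega
      rw [this, mul_zero]
end

section
/- For every integer k ≥ 6, h_{k,k+5} = (128/15)k^5 - (224/3)k^4 + (1174/3)k^3 - (3784/3)k^2 + (35522/15)k - 2004 (equivalently, 15·h_{k,k+5} = 128k^5 - 1120k^4 + 5870k^3 - 18920k^2 + 35522k - 30060). -/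
private lemma c2' (n : ℕ) : (n.choose 2 : ℚ) = n * (n - 1) / 2 := by
  induction n with
  | zero => simp
  | succ n ih =>
    rw [Nat.choose_succ_succ]
    push_cast [Nat.choose_one_right]
    push_cast at ih
    linear_combination ih

private lemma c3' (n : ℕ) : (n.choose 3 : ℚ) = n * (n - 1) * (n - 2) / 6 := by
  induction n with
  | zero => simp
  | succ n ih =>
    rw [Nat.choose_succ_succ]
    push_cast
    push_cast at ih
    linear_combination ih + c2' n

private lemma c4' (n : ℕ) : (n.choose 4 : ℚ) = n * (n - 1) * (n - 2) * (n - 3) / 24 := by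
  induction n with
  | zero => simp
  | succ n ih =>
    rw [Nat.choose_succ_succ]
    push_cast
    push_cast at ih
    linear_combination ih + c3' n

private lemma c5' (n : ℕ) :
    (n.choose 5 : ℚ) = n * (n - 1) * (n - 2) * (n - 3) * (n - 4) / 120 := by
  induction n with
  | zero => simp
  | succ n ih =>
    rw [Nat.choose_succ_succ]
    push_cast
    push_cast at ih
    linear_combination ih + c4' n

private lemma d0' (n : ℕ) : (delannoy n 0 : ℚ) = 1 := by simp [delannoy]

private lemma d1' (n : ℕ) : (delannoy n 1 : ℚ) = 2 * n + 1 := by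
  simp [delannoy, Finset.sum_range_succ]
  ring

private lemma d2' (n : ℕ) : (delannoy n 2 : ℚ) = 2 * n ^ 2 + 2 * n + 1 := by
  have e1 : n + 2 - 1 = n + 1 := by omega
  simp [delannoy, Finset.sum_range_succ, e1]
  push_cast [c2']
  ring

private lemma d3' (n : ℕ) :
    (delannoy n 3 : ℚ) = (4 * n ^ 3 + 6 * n ^ 2 + 8 * n + 3) / 3 := by
  have e1 : n + 3 - 1 = n + 2 := by omega
  have e2 : n + 3 - 2 = n + 1 := by omega
  simp [delannoy, Finset.sum_range_succ, e1, e2]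
  push_cast [c3', show Nat.choose 3 2 = 3 from by decide]
  ring

private lemma d4' (n : ℕ) :
    (delannoy n 4 : ℚ) = (2 * n ^ 4 + 4 * n ^ 3 + 10 * n ^ 2 + 8 * n + 3) / 3 := by
  have e1 : n + 4 - 1 = n + 3 := by omega
  have e2 : n + 4 - 2 = n + 2 := by omega
  have e3 : n + 4 - 3 = n + 1 := by omega
  simp [delannoy, Finset.sum_range_succ, e1, e2, e3]
  push_cast [c4', show Nat.choose 4 2 = 6 from by decide,
    show Nat.choose 4 3 = 4 from by decide]
  ring

private lemma d5' (n : ℕ) :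
    (delannoy n 5 : ℚ)
      = (4 * n ^ 5 + 10 * n ^ 4 + 40 * n ^ 3 + 50 * n ^ 2 + 46 * n + 15) / 15 := by
  have e1 : n + 5 - 1 = n + 4 := by omega
  have e2 : n + 5 - 2 = n + 3 := by omega
  have e3 : n + 5 - 3 = n + 2 := by omega
  have e4 : n + 5 - 4 = n + 1 := by omega
  simp [delannoy, Finset.sum_range_succ, e1, e2, e3, e4]
  push_cast [c5', show Nat.choose 5 2 = 10 from by decide,
    show Nat.choose 5 3 = 10 from by decide, show Nat.choose 5 4 = 5 from by decide]
  ring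

private lemma ichoose_eq_choose (a b : ℤ) (A B : ℕ) (ha : a = A) (hb : b = B)
    (h : B ≤ A) : ichoose a b = A.choose B := by
  subst ha; subst hb
  unfold ichoose
  rw [if_pos ⟨Int.natCast_nonneg B, by exact_mod_cast h⟩]
  simp

private lemma ichoose_zero_of_lt (a b : ℤ) (h : a < b) : ichoose a b = 0 := by
  unfold ichoose
  rw [if_neg]
  rintro ⟨-, h2⟩; omega

private lemma choose_shift (a b c : ℕ) (h : a = b + c) : a.choose b = a.choose c := by
  subst h
  have := Nat.choose_symm (show c ≤ b + c by omega)
  rw [show b + c - c = b by omega] at this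
  exact this

theorem ccPoly_area_width_add_five (k : ℕ) (hk : 6 ≤ k) :
    (ccPoly k (k + 5) : ℚ)
      = 128 / 15 * (k : ℚ) ^ 5 - 224 / 3 * (k : ℚ) ^ 4 + 1174 / 3 * (k : ℚ) ^ 3
          - 3784 / 3 * (k : ℚ) ^ 2 + 35522 / 15 * (k : ℚ) - 2004 := by
  obtain ⟨m, rfl⟩ : ∃ m, k = m + 6 := ⟨k - 6, by omega⟩
  unfold ccPoly
  rw [← Finset.sum_subset (Finset.range_subset_range.mpr (by omega : 6 ≤ m + 6))
    (fun x hx hx6 => ?_)]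
  · rw [Finset.sum_range_succ, Finset.sum_range_succ, Finset.sum_range_succ,
      Finset.sum_range_succ, Finset.sum_range_succ, Finset.sum_range_succ,
      Finset.sum_range_zero]
    rw [ichoose_eq_choose _ _ (2 * m + 15) (2 * m + 10) (by push_cast; ring)
        (by push_cast; ring) (by omega),
      ichoose_eq_choose _ _ (2 * m + 14) (2 * m + 10) (by push_cast; ring)
        (by push_cast; ring) (by omega),
      ichoose_eq_choose _ _ (2 * m + 13) (2 * m + 10) (by push_cast; ring)
        (by push_cast; ring) (by omega),
      ichoose_eq_choose _ _ (2 * m + 12) (2 * m + 10) (by push_cast; ring)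
        (by push_cast; ring) (by omega),
      ichoose_eq_choose _ _ (2 * m + 11) (2 * m + 10) (by push_cast; ring)
        (by push_cast; ring) (by omega),
      ichoose_eq_choose _ _ (2 * m + 10) (2 * m + 10) (by push_cast; ring)
        (by push_cast; ring) (by omega)]
    rw [choose_shift (2 * m + 15) (2 * m + 10) 5 (by omega),
      choose_shift (2 * m + 14) (2 * m + 10) 4 (by omega),
      choose_shift (2 * m + 13) (2 * m + 10) 3 (by omega),
      choose_shift (2 * m + 12) (2 * m + 10) 2 (by omega),
      choose_shift (2 * m + 11) (2 * m + 10) 1 (by omega),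
      Nat.choose_self]
    have h0 : m + 6 - 1 - 0 = m + 5 := by omega
    have h1 : m + 6 - 1 - 1 = m + 4 := by omega
    have h2 : m + 6 - 1 - 2 = m + 3 := by omega
    have h3 : m + 6 - 1 - 3 = m + 2 := by omega
    have h4 : m + 6 - 1 - 4 = m + 1 := by omega
    have h5 : m + 6 - 1 - 5 = m := by omega
    rw [h0, h1, h2, h3, h4, h5]
    push_cast [d0', d1', d2', d3', d4', d5', c2', c3', c4', c5',
      Nat.choose_one_right]
    ring
  · refine mul_eq_zero_of_right _ (ichoose_zero_of_lt _ _ ?_)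
    simp only [Finset.mem_range] at hx hx6
    push_cast
    omega
end

section
/- For every natural number i, there exists a polynomial P with rational coefficients of degree exactly i and leading coefficient 8^i / i! such that r_{k,2k+i} = P(k) for every integer k ≥ i+1. -/
open Finset Polynomial

/-! ### Auxiliary development -/

lemma choose_shift_s18 (n m : ℕ) : (n + m).choose n = (n + m).choose m := by
  have h := Nat.choose_symm (n := n + m) (k := m) (Nat.le_add_left m n)
  rwa [Nat.add_sub_cancel] at h

lemma ichoose_natCast (a b : ℕ) : ichoose a b = (a.choose b : ℤ) := by
  unfold ichoose
  by_cases h : b ≤ a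
  · rw [if_pos ⟨Int.natCast_nonneg b, by exact_mod_cast h⟩]
    simp
  · rw [if_neg (by push_neg; intro _; exact_mod_cast lt_of_not_ge h)]
    rw [Nat.choose_eq_zero_of_lt (lt_of_not_ge h)]
    simp

/-- The binomial-coefficient polynomial. -/
noncomputable def Bpoly (m : ℕ) : ℚ[X] :=
  C ((m.factorial : ℚ)⁻¹) * descPochhammer ℚ m

lemma Bpoly_natDegree_le (m : ℕ) : (Bpoly m).natDegree ≤ m := by
  refine natDegree_mul_le.trans ?_
  simp [descPochhammer_natDegree]

lemma Bpoly_coeff (m : ℕ) : (Bpoly m).coeff m = (m.factorial : ℚ)⁻¹ := by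
  rw [Bpoly, coeff_C_mul]
  have h := (monic_descPochhammer ℚ m).leadingCoeff
  rw [Polynomial.leadingCoeff, descPochhammer_natDegree] at h
  rw [h, mul_one]

lemma Bpoly_eval (m n : ℕ) : (Bpoly m).eval (n : ℚ) = (n.choose m : ℚ) := by
  rw [Bpoly, eval_mul, eval_C, descPochhammer_eval_eq_descFactorial,
    Nat.descFactorial_eq_factorial_mul_choose]
  have h : (m.factorial : ℚ) ≠ 0 := Nat.cast_ne_zero.mpr m.factorial_ne_zero
  push_cast
  field_simp

lemma natDegree_comp_linear_le (p : ℚ[X]) {d : ℕ} (hp : p.natDegree ≤ d) (a b : ℚ) :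
    (p.comp (C a * X + C b)).natDegree ≤ d := by
  refine natDegree_comp_le.trans ?_
  calc p.natDegree * (C a * X + C b).natDegree ≤ d * 1 :=
        Nat.mul_le_mul hp natDegree_linear_le
    _ = d := mul_one d

lemma coeff_comp_linear (p : ℚ[X]) {d : ℕ} (hp : p.natDegree ≤ d) (a b : ℚ) (ha : a ≠ 0) :
    (p.comp (C a * X + C b)).coeff d = a ^ d * p.coeff d := by
  rcases eq_or_lt_of_le hp with h | h
  · by_cases hp0 : p = 0
    · simp [hp0]
    · have hq : (C a * X + C b).natDegree ≠ 0 := by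
        rw [natDegree_linear ha]; exact one_ne_zero
      have key := coeff_comp_degree_mul_degree (p := p) (q := C a * X + C b) hq
      rw [natDegree_linear ha, mul_one, leadingCoeff_linear ha, h] at key
      rw [key, Polynomial.leadingCoeff, h]
      ring
  · have h1 : (p.comp (C a * X + C b)).natDegree < d :=
      lt_of_le_of_lt (natDegree_comp_linear_le p le_rfl a b) h
    rw [coeff_eq_zero_of_natDegree_lt h1, coeff_eq_zero_of_natDegree_lt h, mul_zero]

/-- Binomial convolution sum. -/
lemma conv_sum (x : ℚ) (j : ℕ) :
    ∑ s ∈ range (j + 1), x ^ s / (s.factorial : ℚ) * (x ^ (j - s) / ((j - s).factorial : ℚ))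
      = (2 * x) ^ j / (j.factorial : ℚ) := by
  have hj : (j.factorial : ℚ) ≠ 0 := Nat.cast_ne_zero.mpr j.factorial_ne_zero
  have step : ∀ s ∈ range (j + 1),
      x ^ s / (s.factorial : ℚ) * (x ^ (j - s) / ((j - s).factorial : ℚ))
        = (j.choose s : ℚ) * x ^ j / (j.factorial : ℚ) := by
    intro s hs
    have hsj : s ≤ j := Nat.lt_succ_iff.mp (mem_range.mp hs)
    have hx : x ^ s * x ^ (j - s) = x ^ j := by
      rw [← pow_add, Nat.add_sub_cancel' hsj]
    have hsf : (s.factorial : ℚ) ≠ 0 := Nat.cast_ne_zero.mpr s.factorial_ne_zero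
    have hsf' : ((j - s).factorial : ℚ) ≠ 0 := Nat.cast_ne_zero.mpr (j - s).factorial_ne_zero
    rw [Nat.cast_choose ℚ hsj]
    field_simp
    rw [← hx]
  rw [Finset.sum_congr rfl step, ← Finset.sum_div, ← Finset.sum_mul, ← Nat.cast_sum,
    Nat.sum_range_choose, mul_pow]
  push_cast
  ring

/-- The Delannoy polynomial. -/
noncomputable def Dpoly (m : ℕ) : ℚ[X] :=
  ∑ t ∈ range (m + 1), C ((m.choose t : ℚ)) * (Bpoly m).comp (C 1 * X + C ((m : ℚ) - t))

lemma Dpoly_natDegree_le (m : ℕ) : (Dpoly m).natDegree ≤ m := by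
  refine natDegree_sum_le_of_forall_le _ _ fun t _ => ?_
  refine natDegree_mul_le.trans ?_
  simp only [natDegree_C, zero_add]
  exact natDegree_comp_linear_le _ (Bpoly_natDegree_le m) _ _

lemma Dpoly_coeff (m : ℕ) : (Dpoly m).coeff m = 2 ^ m / (m.factorial : ℚ) := by
  rw [Dpoly, finset_sum_coeff]
  have step : ∀ t ∈ range (m + 1),
      (C ((m.choose t : ℚ)) * (Bpoly m).comp (C 1 * X + C ((m : ℚ) - t))).coeff m
        = (m.choose t : ℚ) * (m.factorial : ℚ)⁻¹ := by
    intro t _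
    rw [coeff_C_mul, coeff_comp_linear _ (Bpoly_natDegree_le m) _ _ one_ne_zero,
      Bpoly_coeff, one_pow, one_mul]
  rw [Finset.sum_congr rfl step, ← Finset.sum_mul, ← Nat.cast_sum, Nat.sum_range_choose]
  rw [div_eq_mul_inv]
  push_cast
  ring

lemma Dpoly_eval (m n : ℕ) : (Dpoly m).eval (n : ℚ) = (delannoy n m : ℚ) := by
  rw [Dpoly, eval_finset_sum, delannoy]
  push_cast
  refine Finset.sum_congr rfl fun t ht => ?_
  have htm : t ≤ m := Nat.lt_succ_iff.mp (mem_range.mp ht)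
  rw [eval_mul, eval_C, eval_comp]
  simp only [eval_add, eval_mul, eval_C, eval_X, one_mul]
  have e : (n : ℚ) + ((m : ℚ) - t) = ((n + m - t : ℕ) : ℚ) := by
    rw [Nat.cast_sub (le_trans htm (Nat.le_add_left m n))]
    push_cast; ring
  rw [e, Bpoly_eval]

/-- The polynomial for column-convex polyominoes: `h_{k, k+j}` as polynomial in `k`. -/
noncomputable def Hpoly (j : ℕ) : ℚ[X] :=
  ∑ s ∈ range (j + 1),
    (Dpoly s).comp (C 1 * X + C (-(1 + (s : ℚ)))) *
      (Bpoly (j - s)).comp (C 2 * X + C ((j : ℚ) - s - 2))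

lemma Hpoly_natDegree_le (j : ℕ) : (Hpoly j).natDegree ≤ j := by
  refine natDegree_sum_le_of_forall_le _ _ fun s hs => ?_
  have hsj : s ≤ j := Nat.lt_succ_iff.mp (mem_range.mp hs)
  refine natDegree_mul_le.trans ?_
  calc _ ≤ s + (j - s) :=
        Nat.add_le_add (natDegree_comp_linear_le _ (Dpoly_natDegree_le s) _ _)
          (natDegree_comp_linear_le _ (Bpoly_natDegree_le (j - s)) _ _)
    _ = j := Nat.add_sub_cancel' hsj

lemma Hpoly_coeff (j : ℕ) : (Hpoly j).coeff j = 4 ^ j / (j.factorial : ℚ) := by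
  rw [Hpoly, finset_sum_coeff]
  have step : ∀ s ∈ range (j + 1),
      ((Dpoly s).comp (C 1 * X + C (-(1 + (s : ℚ)))) *
        (Bpoly (j - s)).comp (C 2 * X + C ((j : ℚ) - s - 2))).coeff j
      = (2 : ℚ) ^ s / (s.factorial : ℚ) * ((2 : ℚ) ^ (j - s) / ((j - s).factorial : ℚ)) := by
    intro s hs
    have hsj : s ≤ j := Nat.lt_succ_iff.mp (mem_range.mp hs)
    have key := coeff_mul_add_eq_of_natDegree_le
        (natDegree_comp_linear_le _ (Dpoly_natDegree_le s) (1 : ℚ) (-(1 + (s : ℚ))))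
        (natDegree_comp_linear_le _ (Bpoly_natDegree_le (j - s)) 2 ((j : ℚ) - s - 2))
    rw [Nat.add_sub_cancel' hsj] at key
    rw [key, coeff_comp_linear _ (Dpoly_natDegree_le s) _ _ one_ne_zero,
      coeff_comp_linear _ (Bpoly_natDegree_le (j - s)) _ _ two_ne_zero,
      Dpoly_coeff, Bpoly_coeff]
    simp only [div_eq_mul_inv, one_pow, one_mul]
  rw [Finset.sum_congr rfl step, conv_sum]
  norm_num

lemma Hpoly_eval (j k : ℕ) (hk : j + 1 ≤ k) :
    (Hpoly j).eval (k : ℚ) = (ccPoly k (k + j) : ℚ) := by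
  have hk1 : 1 ≤ k := le_trans (by omega) hk
  -- Reduce the right-hand side to a sum of natural binomials over `range (j+1)`.
  have hcc : ccPoly k (k + j)
      = ∑ s ∈ range (j + 1),
          (delannoy (k - 1 - s) s : ℤ) * ((2 * k - 2 + (j - s)).choose (j - s) : ℤ) := by
    rw [ccPoly, ← Finset.sum_subset (Finset.range_subset_range.mpr hk)]
    · refine Finset.sum_congr rfl fun s hs => ?_
      have hsj : s ≤ j := Nat.lt_succ_iff.mp (mem_range.mp hs)
      congr 1
      have h1 : ((k + j : ℕ) : ℤ) - s + k - 2 = ((2 * k - 2 + (j - s) : ℕ) : ℤ) := by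
        push_cast [Nat.cast_sub hsj]
        omega
      have h2 : 2 * (k : ℤ) - 2 = ((2 * k - 2 : ℕ) : ℤ) := by omega
      rw [h1, h2, ichoose_natCast]
      exact_mod_cast choose_shift_s18 (2 * k - 2) (j - s)
    · intro s hs hns
      have hjs : j < s := by
        simp only [mem_range, not_lt] at hns
        omega
      have hz : ichoose (((k + j : ℕ) : ℤ) - s + k - 2) (2 * (k : ℤ) - 2) = 0 := by
        rw [ichoose, if_neg]
        push_neg
        intro _
        push_cast
        omega
      rw [hz, mul_zero]
  rw [hcc, Hpoly, eval_finset_sum]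
  push_cast
  refine Finset.sum_congr rfl fun s hs => ?_
  have hsj : s ≤ j := Nat.lt_succ_iff.mp (mem_range.mp hs)
  rw [eval_mul, eval_comp, eval_comp]
  simp only [eval_add, eval_mul, eval_C, eval_X, one_mul, eval_neg]
  have e1 : (k : ℚ) + -(1 + (s : ℚ)) = ((k - 1 - s : ℕ) : ℚ) := by
    have h1 : s ≤ k - 1 := by omega
    rw [Nat.cast_sub h1, Nat.cast_sub hk1]
    push_cast; ring
  have e2 : 2 * (k : ℚ) + ((j : ℚ) - s - 2) = ((2 * k - 2 + (j - s) : ℕ) : ℚ) := by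
    have h2 : 2 ≤ 2 * k := by omega
    push_cast [Nat.cast_sub h2, Nat.cast_sub hsj]
    ring
  rw [e1, e2, Dpoly_eval, Bpoly_eval]

/-- The plateau polynomial: `r_{k, 2k+i}` as polynomial in `k`. -/
noncomputable def Rpoly (i : ℕ) : ℚ[X] :=
  ∑ a ∈ range (i + 1), Hpoly a * Hpoly (i - a)

lemma Rpoly_natDegree_le (i : ℕ) : (Rpoly i).natDegree ≤ i := by
  refine natDegree_sum_le_of_forall_le _ _ fun a ha => ?_
  have hai : a ≤ i := Nat.lt_succ_iff.mp (mem_range.mp ha)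
  refine natDegree_mul_le.trans ?_
  calc _ ≤ a + (i - a) := Nat.add_le_add (Hpoly_natDegree_le a) (Hpoly_natDegree_le (i - a))
    _ = i := Nat.add_sub_cancel' hai

lemma Rpoly_coeff (i : ℕ) : (Rpoly i).coeff i = 8 ^ i / (i.factorial : ℚ) := by
  rw [Rpoly, finset_sum_coeff]
  have step : ∀ a ∈ range (i + 1),
      (Hpoly a * Hpoly (i - a)).coeff i
        = (4 : ℚ) ^ a / (a.factorial : ℚ) * ((4 : ℚ) ^ (i - a) / ((i - a).factorial : ℚ)) := by
    intro a ha
    have hai : a ≤ i := Nat.lt_succ_iff.mp (mem_range.mp ha)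
    have key := coeff_mul_add_eq_of_natDegree_le (Hpoly_natDegree_le a) (Hpoly_natDegree_le (i - a))
    rw [Nat.add_sub_cancel' hai] at key
    rw [key, Hpoly_coeff, Hpoly_coeff]
  rw [Finset.sum_congr rfl step, conv_sum]
  norm_num

lemma Rpoly_eval (i k : ℕ) (hk : i + 1 ≤ k) :
    (plateau k (2 * k + i) : ℚ) = (Rpoly i).eval (k : ℚ) := by
  have hsub : 2 * k + i - k = k + i := by omega
  rw [plateau, hsub, ← Finset.Ico_add_one_right_eq_Icc, Finset.sum_Ico_eq_sum_range]
  have hrange : k + i + 1 - k = i + 1 := by omega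
  rw [hrange, Rpoly, eval_finset_sum]
  push_cast
  refine Finset.sum_congr rfl fun a ha => ?_
  have hai : a ≤ i := Nat.lt_succ_iff.mp (mem_range.mp ha)
  have h2 : 2 * k + i - (k + a) = k + (i - a) := by omega
  rw [h2, eval_mul, Hpoly_eval a k (by omega), Hpoly_eval (i - a) k (by omega)]

/-- For every `i`, `r_{k,2k+i}` is a polynomial in `k` of degree exactly `i` with
leading coefficient `8ⁱ/i!`, for all `k ≥ i+1`. -/
theorem plateau_polynomial (i : ℕ) :
    ∃ P : Polynomial ℚ, P.degree = i ∧ P.leadingCoeff = 8 ^ i / (Nat.factorial i : ℚ) ∧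
      ∀ k : ℕ, i + 1 ≤ k → (plateau k (2 * k + i) : ℚ) = P.eval (k : ℚ) := by
  refine ⟨Rpoly i, ?_, ?_, fun k hk => Rpoly_eval i k hk⟩
  · have hcne : (Rpoly i).coeff i ≠ 0 := by
      rw [Rpoly_coeff]
      positivity
    have hnd : (Rpoly i).natDegree = i :=
      natDegree_eq_of_le_of_coeff_ne_zero (Rpoly_natDegree_le i) hcne
    have hne : Rpoly i ≠ 0 := fun h => hcne (by simp [h])
    rw [degree_eq_natDegree hne, hnd]
  · have hcne : (Rpoly i).coeff i ≠ 0 := by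
      rw [Rpoly_coeff]
      positivity
    have hnd : (Rpoly i).natDegree = i :=
      natDegree_eq_of_le_of_coeff_ne_zero (Rpoly_natDegree_le i) hcne
    rw [Polynomial.leadingCoeff, hnd, Rpoly_coeff]
end
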